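/- For any constant c > e/√2, there is some n0 such that for all n ≥ n0 and all t ≥ 2: there exists a set 𝒯 = {T1, …, Tt} of trees on a common label set of size n such that min over all trees T on that label set of Σ_{Ti∈𝒯} d_LR(T, Ti) ≥ (t/4)(n − c√n). In particular, there are instances of AST-LR in which Ω(t(n − √n)) leaves need to be deleted. -/

import Mathlib

/-!
Common framework: rooted binary trees with leaves bijectively labeled by a
finite label set, leaf removal, restriction, the leaf-removal distance `d_LR`,
compatibility, leaf-disagreements, triplets, LPR moves, etc.
-/

universe u

/-- A rooted binary tree whose leaves carry labels from `α`. -/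
inductive LTree (α : Type u) : Type u where
  | leaf : α → LTree α
  | node : LTree α → LTree α → LTree α

namespace LTree

variable {α : Type u} [DecidableEq α]

/-- The set of leaf labels of a tree. -/
def labels : LTree α → Finset α
  | leaf a => {a}
  | node l r => labels l ∪ labels r

/-- A tree is `Good` when its leaves carry pairwise distinct labels
(i.e. the leaves are bijectively labeled). -/
def Good : LTree α → Prop
  | leaf _ => True
  | node l r => Good l ∧ Good r ∧ Disjoint (labels l) (labels r)

/-- `T` is a (rooted binary, uniquely leaf-labeled) tree on label set `𝒳`. -/
def IsTreeOn (T : LTree α) (𝒳 : Finset α) : Prop :=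
  Good T ∧ labels T = 𝒳

/-- Equality of rooted trees: children of a node are unordered. -/
inductive Iso : LTree α → LTree α → Prop
  | leaf (a : α) : Iso (leaf a) (leaf a)
  | node {l₁ r₁ l₂ r₂ : LTree α} :
      Iso l₁ l₂ → Iso r₁ r₂ → Iso (node l₁ r₁) (node l₂ r₂)
  | swap {l₁ r₁ l₂ r₂ : LTree α} :
      Iso l₁ r₂ → Iso r₁ l₂ → Iso (node l₁ r₁) (node l₂ r₂)

/-- Equality of possibly empty trees (`none` is the empty tree). -/
def OptIso : Option (LTree α) → Option (LTree α) → Prop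
  | none, none => True
  | some t₁, some t₂ => Iso t₁ t₂
  | _, _ => False

/-- Restriction `T|_S`: keep exactly the leaves with labels in `S`, suppressing
the resulting degree-two vertices and degree-one roots; the result is `none`
when no leaf survives. -/
def restrict : LTree α → Finset α → Option (LTree α)
  | leaf a, S => if a ∈ S then some (leaf a) else none
  | node l r, S =>
    match restrict l S, restrict r S with
    | some l', some r' => some (node l' r')
    | some l', none => some l'
    | none, some r' => some r'
    | none, none => none

/-- `T − X`: remove from `T` every leaf whose label lies in `X`. -/
def remove (T : LTree α) (X : Finset α) : Option (LTree α) :=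
  restrict T (labels T \ X)

/-- The leaf-removal distance `d_LR(T₁,T₂)`: the minimum number of labels
whose removal makes the two trees equal. -/
noncomputable def dLR (T₁ T₂ : LTree α) : ℕ :=
  sInf {n | ∃ X : Finset α, X ⊆ labels T₁ ∪ labels T₂ ∧ X.card = n ∧
    OptIso (remove T₁ X) (remove T₂ X)}

def labelsO : Option (LTree α) → Finset α
  | none => ∅
  | some t => labels t

def GoodO : Option (LTree α) → Prop
  | none => True
  | some t => Good t

def restrictO : Option (LTree α) → Finset α → Option (LTree α)
  | none, _ => none
  | some t, S => restrict t S

/-- A family of (possibly empty) trees is compatible if there is a single tree,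
on the union of their label sets, which displays all of them. -/
def CompatibleFamO {ι : Type*} (f : ι → Option (LTree α)) : Prop :=
  ∃ TO : Option (LTree α), GoodO TO ∧
    (↑(labelsO TO) : Set α) = (⋃ i, ↑(labelsO (f i))) ∧
    ∀ i, OptIso (restrictO TO (labelsO (f i))) (f i)

/-- A family of trees is compatible if a single tree displays all of them. -/
def CompatibleFam {ι : Type*} (𝒯 : ι → LTree α) : Prop :=
  CompatibleFamO fun i => some (𝒯 i)

/-- `X` is a leaf-disagreement for the family `𝒯`: removing `X i` from `𝒯 i`
yields a compatible family. -/
def IsLeafDisagreement {ι : Type*} (𝒯 : ι → LTree α) (X : ι → Finset α) : Prop :=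
  CompatibleFamO fun i => remove (𝒯 i) (X i)

/-- `X'` is a label-disagreement for the family `𝒯`. -/
def IsLabelDisagreement {ι : Type*} (𝒯 : ι → LTree α) (X' : Finset α) : Prop :=
  CompatibleFamO fun i => remove (𝒯 i) X'

/-- `MASTRL 𝒯`: the minimum size of a leaf-disagreement for `𝒯`. -/
noncomputable def MASTRL {t : ℕ} (𝒯 : Fin t → LTree α) : ℕ :=
  sInf {v | ∃ X : Fin t → Finset α, (∀ i, X i ⊆ labels (𝒯 i)) ∧
    (∑ i, (X i).card) = v ∧ IsLeafDisagreement 𝒯 X}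

/-- The triplet `ab|c` (as a tree). -/
def tripletTree (a b c : α) : LTree α := node (node (leaf a) (leaf b)) (leaf c)

/-- A rooted triplet: a tree with exactly three (distinctly labeled) leaves. -/
def IsTriplet (R : LTree α) : Prop := Good R ∧ (labels R).card = 3

/-- `ab|c` is a triplet of `T`, i.e. `T|_{a,b,c} = ab|c`. -/
def IsTripletOf (T : LTree α) (a b c : α) : Prop :=
  OptIso (restrict T {a, b, c}) (some (tripletTree a b c))

/-- `tr(T)`: the triplet decomposition of `T`. -/
def trSet (T : LTree α) : Set (LTree α) :=
  {R | ∃ a b c : α, R = tripletTree a b c ∧ IsTripletOf T a b c}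

/-- A set of trees is compatible: some tree on the union of the label sets
displays every member. -/
def CompatibleSet (S : Set (LTree α)) : Prop :=
  ∃ TO : Option (LTree α), GoodO TO ∧
    (↑(labelsO TO) : Set α) = (⋃ R ∈ S, ↑(labels R)) ∧
    ∀ R ∈ S, OptIso (restrictO TO (labels R)) (some R)

/-- `MINRTI ℛ`: the minimum number of triplets to delete from `ℛ` so that the
remaining triplets are compatible. -/
noncomputable def MINRTI {t : ℕ} (R : Fin t → LTree α) : ℕ :=
  sInf {m | ∃ s : Finset (Fin t), s.card = m ∧
    CompatibleFam (fun i : {i : Fin t // i ∉ s} => R i.1)}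

/-- Graft the leaf `x` at the position (edge) addressed by `p` in `T`.
The empty address grafts `x` above the root of `T` (the `⊥` case); the address
of an internal/leaf vertex `v` grafts `x` on the edge between `v` and its
parent.  `none` when the address is invalid. -/
def graftAt (x : α) : LTree α → List Bool → Option (LTree α)
  | T, [] => some (node (leaf x) T)
  | leaf _, _ :: _ => none
  | node l r, b :: p =>
    if b then (graftAt x l p).map (fun l' => node l' r)
    else (graftAt x r p).map (fun r' => node l r')

/-- `T'` is obtained from `T` by a single LPR (leaf prune-and-regraft) move on
the leaf `x`: prune `x` from `T` and regraft it, either on an edge of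
`T − {x}` or above its root. -/
def LPRStep (x : α) (T T' : LTree α) : Prop :=
  (remove T {x} = none ∧ T' = leaf x) ∨
  ∃ T₀ p, remove T {x} = some T₀ ∧ graftAt x T₀ p = some T'

/-- `TurnsInto L T T'`: the LPR sequence with (ordered) leaf list `L` turns
`T` into `T'`. -/
inductive TurnsInto : List α → LTree α → LTree α → Prop
  | nil {T T' : LTree α} : Iso T T' → TurnsInto [] T T'
  | cons {x : α} {xs : List α} {T T'' T' : LTree α} :
      LPRStep x T T'' → TurnsInto xs T'' T' → TurnsInto (x :: xs) T T'

/-- `confset(T₁,T₂)`: the collection of 3-label sets `{a,b,c}` such that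
`T₁` contains a triplet on `{a,b,c}` conflicting with a triplet of `T₂`. -/
def confset (T₁ T₂ : LTree α) : Set (Finset α) :=
  {s | ∃ a b c : α, s = {a, b, c} ∧ IsTripletOf T₁ a b c ∧
    (IsTripletOf T₂ a c b ∨ IsTripletOf T₂ b c a)}

/-- `X` is a minimal disagreement between `T₁` and `T₂`. -/
def MinimalDisagreement (T₁ T₂ : LTree α) (X : Finset α) : Prop :=
  X ⊆ labels T₁ ∪ labels T₂ ∧
  OptIso (remove T₁ X) (remove T₂ X) ∧
  ∀ X' ⊂ X, ¬ OptIso (remove T₁ X') (remove T₂ X')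

/-- `u` is (the rooted subtree hanging at) a node of `T`. -/
inductive IsSubtree : LTree α → LTree α → Prop
  | refl (T : LTree α) : IsSubtree T T
  | left {u l r : LTree α} : IsSubtree u l → IsSubtree u (node l r)
  | right {u l r : LTree α} : IsSubtree u r → IsSubtree u (node l r)

/-- `u` is the least common ancestor in `T` of the labels in `Z`. -/
def IsLCA (T : LTree α) (Z : Finset α) (u : LTree α) : Prop :=
  IsSubtree u T ∧ Z ⊆ labels u ∧
    ∀ w, IsSubtree w T → Z ⊆ labels w → IsSubtree u w

end LTree

namespace LTree

variable {α : Type u} [DecidableEq α]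

theorem Iso.symm' {u v : LTree α} (h : Iso u v) : Iso v u := by
  induction h with
  | leaf a => exact Iso.leaf a
  | node h1 h2 ih1 ih2 => exact Iso.node ih1 ih2
  | swap h1 h2 ih1 ih2 => exact Iso.swap ih2 ih1

theorem Iso.trans' {u v w : LTree α} (h1 : Iso u v) (h2 : Iso v w) : Iso u w := by
  induction h1 generalizing w with
  | leaf a => exact h2
  | node ha hb iha ihb =>
    cases h2 with
    | node hc hd => exact Iso.node (iha hc) (ihb hd)
    | swap hc hd => exact Iso.swap (iha hc) (ihb hd)
  | swap ha hb iha ihb =>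
    cases h2 with
    | node hc hd => exact Iso.swap (iha hd) (ihb hc)
    | swap hc hd => exact Iso.node (iha hd) (ihb hc)

theorem optIso_symm : ∀ {u v : Option (LTree α)}, OptIso u v → OptIso v u
  | none, none, _ => trivial
  | some _, some _, h => Iso.symm' h
  | none, some _, h => h.elim
  | some _, none, h => h.elim

theorem optIso_trans : ∀ {u v w : Option (LTree α)}, OptIso u v → OptIso v w → OptIso u w
  | none, none, none, _, _ => trivial
  | some _, some _, some _, h1, h2 => Iso.trans' h1 h2
  | none, none, some _, _, h2 => h2.elim
  | some _, some _, none, _, h2 => h2.elim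
  | none, some _, _, h1, _ => h1.elim
  | some _, none, _, h1, _ => h1.elim

set_option linter.unusedSectionVars false

theorem restrict_empty : ∀ T : LTree α, restrict T (∅ : Finset α) = none
  | leaf a => by simp [restrict]
  | node l r => by
    simp only [restrict, restrict_empty l, restrict_empty r]

theorem restrictO_restrict : ∀ (T : LTree α) (S₁ S₂ : Finset α),
    restrictO (restrict T S₁) S₂ = restrict T (S₁ ∩ S₂)
  | leaf a, S₁, S₂ => by
    by_cases h1 : a ∈ S₁ <;> by_cases h2 : a ∈ S₂ <;>
      simp [restrict, restrictO, h1, h2, Finset.mem_inter]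
  | node l r, S₁, S₂ => by
    have ihl := restrictO_restrict l S₁ S₂
    have ihr := restrictO_restrict r S₁ S₂
    simp only [restrict]
    cases hl : restrict l S₁ <;> cases hr : restrict r S₁ <;>
      rw [hl] at ihl <;> rw [hr] at ihr <;>
      simp only [restrictO] at ihl ihr ⊢ <;>
      rw [← ihl, ← ihr] <;>
      first
        | rfl
        | (rename_i v; cases v.restrict S₂ <;> rfl)
        | (simp only [restrict])

theorem optIso_restrict {u v : LTree α} (h : Iso u v) (S : Finset α) :
    OptIso (restrict u S) (restrict v S) := by
  induction h with
  | leaf a =>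
    simp only [restrict]
    split
    · exact Iso.leaf a
    · trivial
  | @node l₁ r₁ l₂ r₂ h1 h2 ih1 ih2 =>
    simp only [restrict]
    cases hl₁ : restrict l₁ S <;> cases hl₂ : restrict l₂ S <;>
      cases hr₁ : restrict r₁ S <;> cases hr₂ : restrict r₂ S <;>
      rw [hl₁, hl₂] at ih1 <;> rw [hr₁, hr₂] at ih2 <;>
      simp only [OptIso] at ih1 ih2 ⊢ <;>
      first
        | trivial
        | exact ih1.elim
        | exact ih2.elim
        | exact ih1
        | exact ih2
        | exact Iso.node ih1 ih2
  | @swap l₁ r₁ l₂ r₂ h1 h2 ih1 ih2 =>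
    simp only [restrict]
    cases hl₁ : restrict l₁ S <;> cases hl₂ : restrict l₂ S <;>
      cases hr₁ : restrict r₁ S <;> cases hr₂ : restrict r₂ S <;>
      rw [hl₁, hr₂] at ih1 <;> rw [hr₁, hl₂] at ih2 <;>
      simp only [OptIso] at ih1 ih2 ⊢ <;>
      first
        | trivial
        | exact ih1.elim
        | exact ih2.elim
        | exact ih1
        | exact ih2
        | exact Iso.swap ih1 ih2

theorem optIso_restrictO {u v : Option (LTree α)} (h : OptIso u v) (S : Finset α) :
    OptIso (restrictO u S) (restrictO v S) := by
  match u, v with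
  | none, none => trivial
  | some a, some b => exact optIso_restrict h S
  | none, some _ => exact h.elim
  | some _, none => exact h.elim

/-- Caterpillar tree: `cat x l` has topmost leaf `x` and then the leaves of
`l` in order, the last element of `l` being the deepest. -/
def cat : α → List α → LTree α
  | x, [] => leaf x
  | x, y :: l => node (cat y l) (leaf x)

/-- Caterpillar on a possibly empty list. -/
def catL : List α → Option (LTree α)
  | [] => none
  | x :: l => some (cat x l)

theorem labels_cat : ∀ (l : List α) (x : α), labels (cat x l) = insert x l.toFinset
  | [], x => by simp [cat, labels]
  | y :: l, x => by
    simp only [cat, labels, labels_cat l y, List.toFinset_cons]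
    ext a
    simp [or_comm, or_assoc, or_left_comm]

theorem good_cat : ∀ (l : List α) (x : α), (x :: l).Nodup → Good (cat x l)
  | [], x, _ => trivial
  | y :: l, x, h => by
    have h1 : (y :: l).Nodup := h.of_cons
    have h2 : x ∉ y :: l := (List.nodup_cons.mp h).1
    refine ⟨good_cat l y h1, trivial, ?_⟩
    rw [labels_cat, labels]
    simp only [Finset.disjoint_singleton_right, Finset.mem_insert, List.mem_toFinset]
    simp only [List.mem_cons, not_or] at h2
    tauto

theorem restrict_cat (S : Finset α) : ∀ (l : List α) (x : α),
    restrict (cat x l) S = catL (List.filter (fun a => decide (a ∈ S)) (x :: l))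
  | [], x => by
    by_cases hx : x ∈ S <;> simp [cat, restrict, catL, List.filter, hx]
  | y :: l, x => by
    have ih := restrict_cat S l y
    by_cases hx : x ∈ S <;>
      cases hf : List.filter (fun a => decide (a ∈ S)) (y :: l) <;>
      simp [cat, restrict, ih, hf, catL, List.filter_cons, hx]

theorem cat_iso_head {l l' : List α} {x x' : α} (hl : 2 ≤ l.length)
    (hl' : 2 ≤ l'.length) (h : Iso (cat x l) (cat x' l')) : x = x' := by
  match l, hl, l', hl' with
  | y :: z :: m, _, y' :: z' :: m', _ =>
    simp only [cat] at h
    cases h with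
    | node h1 h2 => cases h2; rfl
    | swap h1 h2 => cases h1

theorem noniso_restrict_cat {L : List α} (hN : L.Nodup) {x y : α} {xs ys : List α}
    (hL : L = x :: xs) (hR : L.reverse = y :: ys) {S : Finset α}
    (hS : S ⊆ L.toFinset) (h3 : 3 ≤ S.card) :
    ¬ OptIso (restrict (cat y ys) S) (restrict (cat x xs) S) := by
  intro h
  set p : α → Bool := fun a => decide (a ∈ S) with hp
  have hB : restrict (cat x xs) S = catL (L.filter p) := by rw [restrict_cat, ← hL]
  have hA : restrict (cat y ys) S = catL ((L.filter p).reverse) := by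
    rw [restrict_cat, ← hR, List.filter_reverse]
  have hFnd : (L.filter p).Nodup := hN.filter p
  have hFlen : (L.filter p).length = S.card := by
    rw [← List.toFinset_card_of_nodup hFnd, List.toFinset_filter]
    congr 1
    have : Finset.filter (fun a => p a = true) L.toFinset
        = Finset.filter (fun a => a ∈ S) L.toFinset := by
      apply Finset.filter_congr; intro a _; simp [hp]
    rw [this, Finset.filter_mem_eq_inter, Finset.inter_eq_right.mpr hS]
  rw [hA, hB] at h
  obtain ⟨a, M, hFa⟩ : ∃ a M, L.filter p = a :: M :=
    List.exists_cons_of_ne_nil (by intro h0; rw [h0] at hFlen; simp at hFlen; omega)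
  obtain ⟨z, Z, hFz⟩ : ∃ z Z, (L.filter p).reverse = z :: Z :=
    List.exists_cons_of_ne_nil (by
      rw [ne_eq, List.reverse_eq_nil_iff]
      intro h0; rw [h0] at hFlen; simp at hFlen; omega)
  rw [hFz, hFa] at h
  simp only [catL, OptIso] at h
  have hzZ : Z.length = S.card - 1 := by
    have := congrArg List.length hFz
    simp [hFlen] at this
    omega
  have haM : M.length = S.card - 1 := by
    have := congrArg List.length hFa
    simp [hFlen] at this
    omega
  have hza : z = a := cat_iso_head (by omega) (by omega) h
  -- derive a contradiction with Nodup
  have hMne : M.reverse ≠ [] := by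
    simp only [ne_eq, List.reverse_eq_nil_iff]
    intro h0; rw [h0] at haM; simp at haM; omega
  obtain ⟨u, U, hU⟩ := List.exists_cons_of_ne_nil hMne
  have : z :: Z = u :: (U ++ [a]) := by
    rw [← hFz, hFa, List.reverse_cons, hU]; rfl
  have hzu : z = u := by injection this
  have huM : u ∈ M := by
    have : u ∈ M.reverse := by rw [hU]; exact List.mem_cons_self
    exact List.mem_reverse.mp this
  rw [hFa] at hFnd
  exact (List.nodup_cons.mp hFnd).1 (hza ▸ hzu ▸ huM)

theorem dLR_spec (T₁ T₂ : LTree α) :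
    ∃ X : Finset α, X ⊆ labels T₁ ∪ labels T₂ ∧ X.card = dLR T₁ T₂ ∧
      OptIso (remove T₁ X) (remove T₂ X) := by
  have hne : {n | ∃ X : Finset α, X ⊆ labels T₁ ∪ labels T₂ ∧ X.card = n ∧
      OptIso (remove T₁ X) (remove T₂ X)}.Nonempty := by
    refine ⟨(labels T₁ ∪ labels T₂).card, labels T₁ ∪ labels T₂, subset_rfl, rfl, ?_⟩
    have h1 : remove T₁ (labels T₁ ∪ labels T₂) = none := by
      rw [remove, Finset.sdiff_eq_empty_iff_subset.mpr Finset.subset_union_left,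
        restrict_empty]
    have h2 : remove T₂ (labels T₁ ∪ labels T₂) = none := by
      rw [remove, Finset.sdiff_eq_empty_iff_subset.mpr Finset.subset_union_right,
        restrict_empty]
    rw [h1, h2]; trivial
  exact Nat.sInf_mem hne

theorem pair_bound {A B T : LTree α} {𝒳 : Finset α}
    (hA : labels A = 𝒳) (hB : labels B = 𝒳) (hT : labels T = 𝒳)
    (hkey : ∀ S : Finset α, S ⊆ 𝒳 → 3 ≤ S.card →
      ¬ OptIso (restrict A S) (restrict B S)) :
    𝒳.card ≤ dLR T A + dLR T B + 2 := by
  by_contra hcon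
  push_neg at hcon
  obtain ⟨X, hX𝒳, hXcard, hX⟩ := dLR_spec T A
  obtain ⟨Y, hY𝒳, hYcard, hY⟩ := dLR_spec T B
  rw [hT, hA, Finset.union_self] at hX𝒳
  rw [hT, hB, Finset.union_self] at hY𝒳
  set S : Finset α := 𝒳 \ (X ∪ Y) with hSdef
  have hS𝒳 : S ⊆ 𝒳 := Finset.sdiff_subset
  have hScard : 3 ≤ S.card := by
    have h1 : (X ∪ Y).card ≤ X.card + Y.card := Finset.card_union_le X Y
    have h2 : S.card = 𝒳.card - (X ∪ Y).card :=
      Finset.card_sdiff_of_subset (Finset.union_subset hX𝒳 hY𝒳)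
    have h3 : (X ∪ Y).card ≤ 𝒳.card := Finset.card_le_card (Finset.union_subset hX𝒳 hY𝒳)
    omega
  have key1 : ∀ (U : LTree α) (W : Finset α), labels U = 𝒳 → S ⊆ 𝒳 \ W →
      restrictO (remove U W) S = restrict U S := by
    intro U W hU hSW
    rw [remove, hU, restrictO_restrict, Finset.inter_eq_right.mpr hSW]
  have hSX : S ⊆ 𝒳 \ X := by
    rw [hSdef]
    exact Finset.sdiff_subset_sdiff (le_refl 𝒳) Finset.subset_union_left
  have hSY : S ⊆ 𝒳 \ Y := by
    rw [hSdef]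
    exact Finset.sdiff_subset_sdiff (le_refl 𝒳) Finset.subset_union_right
  have hTA : OptIso (restrict T S) (restrict A S) := by
    have := optIso_restrictO hX S
    rwa [key1 T X hT hSX, key1 A X hA hSX] at this
  have hTB : OptIso (restrict T S) (restrict B S) := by
    have := optIso_restrictO hY S
    rwa [key1 T Y hT hSY, key1 B Y hB hSY] at this
  exact hkey S hS𝒳 hScard (optIso_trans (optIso_symm hTA) hTB)

end LTree

open LTree

/-- Corollary 1 of the paper.  For any constant `c > e/√2` there
is `n₀` such that for all `n ≥ n₀` and all `t ≥ 2` there exists an instance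
`𝒯 = {T₁,…,T_t}` on a label set of size `n` with
`min_T ∑ᵢ d_LR(T,Tᵢ) ≥ (t/4)(n − c√n)`; in particular there are AST-LR instances
requiring `Ω(t(n − √n))` leaf deletions. -/
theorem worst_case_astlr_instances {α : Type u} [DecidableEq α] [Infinite α] :
    ∀ c : ℝ, Real.exp 1 / Real.sqrt 2 < c →
    ∃ n₀ : ℕ, ∀ n : ℕ, n₀ ≤ n → ∀ t : ℕ, 2 ≤ t →
    ∃ (𝒳 : Finset α) (𝒯 : Fin t → LTree α),
      𝒳.card = n ∧ (∀ i, IsTreeOn (𝒯 i) 𝒳) ∧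
      ∀ T : LTree α, IsTreeOn T 𝒳 →
        (t : ℝ) / 4 * ((n : ℝ) - c * Real.sqrt n) ≤ ∑ i, (dLR T (𝒯 i) : ℝ) := by
  intro c hc
  refine ⟨4, fun n hn t ht => ?_⟩
  have hsqrt4 : Real.sqrt 4 = 2 := by
    rw [show (4:ℝ) = 2^2 by norm_num, Real.sqrt_sq (by norm_num : (0:ℝ) ≤ 2)]
  have hsqrt2 : Real.sqrt 2 ≤ 2 := by
    calc Real.sqrt 2 ≤ Real.sqrt 4 := Real.sqrt_le_sqrt (by norm_num)
      _ = 2 := hsqrt4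
  have h2e : (2:ℝ) ≤ Real.exp 1 := by
    have := Real.add_one_le_exp 1; linarith
  have hc1 : (1:ℝ) ≤ c := by
    have hpos : (0:ℝ) < Real.sqrt 2 := Real.sqrt_pos.mpr (by norm_num)
    have h1 : (1:ℝ) ≤ Real.exp 1 / Real.sqrt 2 := by
      rw [le_div_iff₀ hpos]; linarith
    linarith
  set g := (Infinite.natEmbedding α) with hg
  set L : List α := (List.range n).map g with hLdef
  have hN : L.Nodup := List.Nodup.map g.injective List.nodup_range
  have hLlen : L.length = n := by simp [hLdef]
  have hLne : L ≠ [] := by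
    intro h0; rw [h0] at hLlen; simp at hLlen; omega
  obtain ⟨x, xs, hL⟩ := List.exists_cons_of_ne_nil hLne
  have hRne : L.reverse ≠ [] := by
    rw [ne_eq, List.reverse_eq_nil_iff]; exact hLne
  obtain ⟨y, ys, hR⟩ := List.exists_cons_of_ne_nil hRne
  set 𝒳 := L.toFinset with h𝒳
  have hcard : 𝒳.card = n := by rw [h𝒳, List.toFinset_card_of_nodup hN, hLlen]
  set A := cat y ys with hAdef
  set B := cat x xs with hBdef
  have hlabA : labels A = 𝒳 := by
    rw [hAdef, labels_cat, ← List.toFinset_cons, ← hR, List.toFinset_reverse]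
  have hlabB : labels B = 𝒳 := by
    rw [hBdef, labels_cat, ← List.toFinset_cons, ← hL]
  have hgoodA : Good A := good_cat _ _ (by rw [← hR]; exact List.nodup_reverse.mpr hN)
  have hgoodB : Good B := good_cat _ _ (by rw [← hL]; exact hN)
  set k := t / 2 with hk
  refine ⟨𝒳, fun i => if (i : ℕ) < k then A else B, hcard, ?_, ?_⟩
  · intro i; dsimp only; split
    · exact ⟨hgoodA, hlabA⟩
    · exact ⟨hgoodB, hlabB⟩
  · intro T hT
    have hpair : 𝒳.card ≤ dLR T A + dLR T B + 2 :=
      pair_bound hlabA hlabB hT.2 (fun S hS h3 => noniso_restrict_cat hN hL hR hS h3)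
    rw [hcard] at hpair
    set dA := dLR T A with hdA
    set dB := dLR T B with hdB
    have hkt : k ≤ t := Nat.div_le_self t 2
    have hterm : ∀ i : Fin t, dLR T (if (i:ℕ) < k then A else B)
        = if (i:ℕ) < k then dA else dB := by intro i; split <;> rfl
    have hsum_nat : k * (n - 2) ≤ ∑ i : Fin t, dLR T (if (i:ℕ) < k then A else B) := by
      calc k * (n-2) ≤ k * dA + (t - k) * dB := by
            have h1 : n - 2 ≤ dA + dB := by omega
            calc k * (n-2) ≤ k * (dA + dB) := Nat.mul_le_mul_left k h1
              _ = k * dA + k * dB := Nat.mul_add k dA dB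
              _ ≤ k * dA + (t-k) * dB := by
                  have hkk : k ≤ t - k := by omega
                  exact Nat.add_le_add_left (Nat.mul_le_mul_right dB hkk) _
        _ = ∑ i : Fin t, dLR T (if (i:ℕ) < k then A else B) := by
            simp only [hterm]
            rw [Fin.sum_univ_eq_sum_range (fun i => if i < k then dA else dB) t]
            rw [← Finset.sum_range_add_sum_Ico _ hkt]
            rw [Finset.sum_congr rfl (fun i hi => if_pos (Finset.mem_range.mp hi)),
                Finset.sum_congr rfl
                  (fun i hi => if_neg (by
                    have := (Finset.mem_Ico.mp hi).1; omega))]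
            simp [Finset.sum_const, Nat.card_Ico, mul_comm]
    have hn4 : 4 ≤ n := hn
    have hsq : (2:ℝ) ≤ Real.sqrt n := by
      calc (2:ℝ) = Real.sqrt 4 := hsqrt4.symm
        _ ≤ Real.sqrt n := Real.sqrt_le_sqrt (by exact_mod_cast hn4)
    have h2c : (2:ℝ) ≤ c * Real.sqrt n := by nlinarith [Real.sqrt_nonneg (n:ℝ)]
    have hk4 : (t:ℝ) ≤ 4 * (k:ℝ) := by exact_mod_cast (by omega : t ≤ 4 * k)
    calc (t:ℝ)/4 * ((n:ℝ) - c*Real.sqrt n) ≤ (t:ℝ)/4 * ((n:ℝ) - 2) := by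
          apply mul_le_mul_of_nonneg_left (by linarith) (by positivity)
      _ ≤ (k:ℝ) * ((n:ℝ) - 2) := by
          apply mul_le_mul_of_nonneg_right _ (by
            have : (4:ℝ) ≤ (n:ℝ) := by exact_mod_cast hn4
            linarith)
          rw [div_le_iff₀ (by norm_num : (0:ℝ) < 4)]
          linarith
      _ = ((k * (n-2) : ℕ) : ℝ) := by
          push_cast [Nat.cast_sub (by omega : 2 ≤ n)]; ring
      _ ≤ ((∑ i : Fin t, dLR T (if (i:ℕ) < k then A else B) : ℕ) : ℝ) := by
          exact_mod_cast hsum_nat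
      _ = ∑ i : Fin t, (dLR T (if (i:ℕ) < k then A else B) : ℝ) := by
          push_cast; rfl
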